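/- (Lemma 2, interference-free case) Let K ≥ 1 and M ≥ 2 be integers. Define a localization schedule with N time slots to be a family b_{k,m,n} ∈ {0,1} (k ∈ {1,…,K}, m ∈ {1,…,M}, n ∈ {1,…,N}) satisfying: (i) Σ_{k} b_{k,m,n} ≤ 1 for every m, n; (ii) Σ_{m} b_{k,m,n} ≤ 1 for every k, n; (iii) Σ_{n} b_{k,m,n} ≤ 1 for every k, m; and (iv) Σ_{m,n} b_{k,m,n} ≥ 2 for every k. Then the smallest N for which a localization schedule exists equals max(⌈2K/M⌉, 2). -/

import Mathlib

open Finset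

/-- A localization schedule: `b k m n = 1` iff BS `m` measures target `k` in slot `n`;
each BS senses at most one target per slot, each target reflects to at most one BS per
slot, each (target, BS) pair is used in at most one slot, and each target obtains at
least two measurements. -/
def IsSchedule (K M N : ℕ) (b : Fin K → Fin M → Fin N → ℕ) : Prop :=
  (∀ k m n, b k m n ≤ 1) ∧
  (∀ m n, ∑ k, b k m n ≤ 1) ∧
  (∀ k n, ∑ m, b k m n ≤ 1) ∧
  (∀ k m, ∑ n, b k m n ≤ 1) ∧
  (∀ k, 2 ≤ ∑ m, ∑ n, b k m n)


/-- BS (row) used by request `t`. -/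
def bsOf (M t : ℕ) : ℕ := t % M

/-- slot (column) used by request `t`. -/
def slotOf (M N c t : ℕ) : ℕ := (t / M + c * (t % M)) % N

lemma sum_ite_le_one {α : Type*} [Fintype α] (p : α → Prop) [DecidablePred p]
    (h : ∀ a b, p a → p b → a = b) :
    (∑ x, if p x then (1:ℕ) else 0) ≤ 1 := by
  classical
  rw [Finset.sum_boole, Nat.cast_id]
  refine Finset.card_le_one.mpr fun a ha b hb => ?_
  exact h a b (Finset.mem_filter.mp ha).2 (Finset.mem_filter.mp hb).2

lemma request_inj {M N c : ℕ} (hM : 0 < M) (hN : 0 < N) {t t' : ℕ}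
    (ht : t < M * N) (ht' : t' < M * N)
    (hrow : t % M = t' % M) (hcol : slotOf M N c t = slotOf M N c t') : t = t' := by
  have hd : t / M < N := Nat.div_lt_iff_lt_mul hM |>.mpr (by rw [mul_comm]; omega)
  have hd' : t' / M < N := Nat.div_lt_iff_lt_mul hM |>.mpr (by rw [mul_comm]; omega)
  have h1 : (t / M + c * (t % M)) ≡ (t' / M + c * (t % M)) [MOD N] := by
    unfold slotOf at hcol
    rw [hrow] at hcol ⊢
    exact hcol
  have h2 : t / M ≡ t' / M [MOD N] := Nat.ModEq.add_right_cancel' _ h1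
  have h3 : t / M = t' / M := by
    have := h2
    unfold Nat.ModEq at this
    rwa [Nat.mod_eq_of_lt hd, Nat.mod_eq_of_lt hd'] at this
  have e1 := Nat.div_add_mod t M
  have e2 := Nat.div_add_mod t' M
  rw [h3, hrow] at e1
  omega

lemma row_ne {M : ℕ} (hM : 2 ≤ M) (t : ℕ) : t % M ≠ (t + 1) % M := by
  intro h
  have : t ≡ t + 1 [MOD M] := h
  have := (Nat.modEq_iff_dvd' (by omega)).mp this
  simp at this
  omega

lemma col_ne {M N c : ℕ} (hM : 2 ≤ M) (hN : 2 ≤ N) (hc0 : 0 < c) (hcN : c < N)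
    (hcb : ¬ N ∣ (c * (M - 1) - 1) ∨ 2 ∣ M) (k : ℕ) :
    slotOf M N c (2 * k) ≠ slotOf M N c (2 * k + 1) := by
  intro h
  set t := 2 * k with ht
  have hM0 : 0 < M := by omega
  have hrt : t % M < M := Nat.mod_lt _ hM0
  have hdm := Nat.div_add_mod t M
  by_cases hb : t % M + 1 < M
  · -- non-boundary case
    have huniq : (t + 1) / M = t / M ∧ (t + 1) % M = t % M + 1 :=
      (Nat.div_mod_unique hM0).mpr ⟨by omega, hb⟩
    simp only [slotOf, huniq.1, huniq.2] at h
    rw [Nat.mul_succ] at h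
    have h0 : (t / M + c * (t % M)) + 0 ≡ (t / M + c * (t % M)) + c [MOD N] := by
      simpa [Nat.add_assoc, Nat.ModEq] using h
    have h1 : (0 : ℕ) ≡ c [MOD N] := Nat.ModEq.add_left_cancel' _ h0
    have h2 : N ∣ c := (Nat.modEq_zero_iff_dvd.mp h1.symm)
    have := Nat.le_of_dvd hc0 h2
    omega
  · -- boundary case: t % M = M - 1
    have hrtM : t % M = M - 1 := by omega
    rcases hcb with hnd | hMe
    · have hexp : M * (t / M + 1) = M * (t / M) + M := by ring
      have huniq : (t + 1) / M = t / M + 1 ∧ (t + 1) % M = 0 :=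
        (Nat.div_mod_unique hM0).mpr ⟨by omega, by omega⟩
      simp only [slotOf, huniq.1, huniq.2, hrtM, Nat.mul_zero, Nat.add_zero] at h
      have h0 : c * (M - 1) + t / M ≡ 1 + t / M [MOD N] := by
        have : t / M + c * (M - 1) ≡ t / M + 1 [MOD N] := h
        simpa [Nat.add_comm] using this
      have h1 : c * (M - 1) ≡ 1 [MOD N] := Nat.ModEq.add_right_cancel' _ h0
      have hle : 1 ≤ c * (M - 1) := Nat.mul_pos hc0 (by omega)
      exact hnd ((Nat.modEq_iff_dvd' hle).mp h1.symm)
    · have h2t : 2 ∣ t % M := (Nat.dvd_mod_iff hMe).mpr ⟨k, rfl⟩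
      omega

lemma exists_good_c {M N : ℕ} (hM : 2 ≤ M) (hN : 2 ≤ N) :
    ∃ c, 0 < c ∧ c < N ∧ (¬ N ∣ (c * (M - 1) - 1) ∨ 2 ∣ M) := by
  by_cases hMe : 2 ∣ M
  · exact ⟨1, by omega, by omega, Or.inr hMe⟩
  by_cases hd : N ∣ (M - 2)
  · refine ⟨N - 1, by omega, by omega, Or.inl fun hdd => ?_⟩
    have h1 : 1 ≤ (N - 1) * (M - 1) := Nat.mul_pos (by omega) (by omega)
    have e : (N - 1) * (M - 1) - 1 + M = N * (M - 1) := by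
      zify [h1, show 1 ≤ N from by omega, show 1 ≤ M from by omega]
      ring
    have hNM : N ∣ M := by
      have h2 : N ∣ N * (M - 1) - ((N - 1) * (M - 1) - 1) :=
        Nat.dvd_sub (dvd_mul_right N _) hdd
      have h3 : N * (M - 1) - ((N - 1) * (M - 1) - 1) = M := by omega
      rwa [h3] at h2
    have h4 : N ∣ 2 := by
      have := Nat.dvd_sub hNM hd
      rwa [show M - (M - 2) = 2 from by omega] at this
    have := Nat.le_of_dvd (by omega) h4
    have hN2 : N = 2 := by omega
    rw [hN2] at hd
    omega
  · refine ⟨1, by omega, by omega, Or.inl ?_⟩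
    rwa [show 1 * (M - 1) - 1 = M - 2 from by omega]

lemma exists_schedule {K M N : ℕ} (hM : 2 ≤ M) (hN : 2 ≤ N) (hKMN : 2 * K ≤ M * N) :
    ∃ b : Fin K → Fin M → Fin N → ℕ, IsSchedule K M N b := by
  classical
  obtain ⟨c, hc0, hcN, hcb⟩ := exists_good_c hM hN
  have hM0 : 0 < M := by omega
  have hN0 : 0 < N := by omega
  -- the schedule
  set Q : Fin K → Fin M → Fin N → Prop := fun k m n =>
    (bsOf M (2 * k.1) = m.1 ∧ slotOf M N c (2 * k.1) = n.1) ∨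
    (bsOf M (2 * k.1 + 1) = m.1 ∧ slotOf M N c (2 * k.1 + 1) = n.1) with hQ
  refine ⟨fun k m n => if Q k m n then 1 else 0, fun k m n => ?_, ?_, ?_, ?_, ?_⟩
  · show (if Q k m n then 1 else 0) ≤ 1
    split <;> omega
  · -- per (m,n) at most one target
    intro m n
    refine sum_ite_le_one _ fun a b ha hb => ?_
    have key : ∀ t t' : ℕ, t < 2 * K → t' < 2 * K →
        bsOf M t = m.1 → bsOf M t' = m.1 →
        slotOf M N c t = n.1 → slotOf M N c t' = n.1 → t = t' := by
      intro t t' ht ht' h1 h2 h3 h4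
      exact request_inj hM0 hN0 (by omega) (by omega) (h1.trans h2.symm) (h3.trans h4.symm)
    have hak : 2 * a.1 + 1 < 2 * K := by omega
    have hbk : 2 * b.1 + 1 < 2 * K := by omega
    rcases ha with ⟨ha1, ha2⟩ | ⟨ha1, ha2⟩ <;> rcases hb with ⟨hb1, hb2⟩ | ⟨hb1, hb2⟩ <;>
      [ (have := key (2*a.1) (2*b.1) (by omega) (by omega) ha1 hb1 ha2 hb2);
        (have := key (2*a.1) (2*b.1+1) (by omega) (by omega) ha1 hb1 ha2 hb2);
        (have := key (2*a.1+1) (2*b.1) (by omega) (by omega) ha1 hb1 ha2 hb2);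
        (have := key (2*a.1+1) (2*b.1+1) (by omega) (by omega) ha1 hb1 ha2 hb2)] <;>
      exact Fin.ext (by omega)
  · -- per (k,n) at most one BS
    intro k n
    refine sum_ite_le_one _ fun a b ha hb => ?_
    have hcol := col_ne hM hN hc0 hcN hcb k.1
    rcases ha with ⟨ha1, ha2⟩ | ⟨ha1, ha2⟩ <;> rcases hb with ⟨hb1, hb2⟩ | ⟨hb1, hb2⟩
    · exact Fin.ext (by omega)
    · exact absurd (ha2.trans hb2.symm) hcol
    · exact absurd (hb2.trans ha2.symm) hcol
    · exact Fin.ext (by omega)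
  · -- per (k,m) at most one slot
    intro k m
    refine sum_ite_le_one _ fun a b ha hb => ?_
    have hrow := row_ne hM (2 * k.1)
    rcases ha with ⟨ha1, ha2⟩ | ⟨ha1, ha2⟩ <;> rcases hb with ⟨hb1, hb2⟩ | ⟨hb1, hb2⟩
    · exact Fin.ext (by omega)
    · exact absurd (ha1.trans hb1.symm) hrow
    · exact absurd (hb1.trans ha1.symm) hrow
    · exact Fin.ext (by omega)
  · -- at least two measurements per target
    intro k
    set m1 : Fin M := ⟨bsOf M (2 * k.1), Nat.mod_lt _ hM0⟩ with hm1
    set m2 : Fin M := ⟨bsOf M (2 * k.1 + 1), Nat.mod_lt _ hM0⟩ with hm2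
    set n1 : Fin N := ⟨slotOf M N c (2 * k.1), Nat.mod_lt _ hN0⟩ with hn1
    set n2 : Fin N := ⟨slotOf M N c (2 * k.1 + 1), Nat.mod_lt _ hN0⟩ with hn2
    have hm12 : m1 ≠ m2 := by
      intro h
      exact row_ne hM (2 * k.1) (congrArg Fin.val h)
    have hb1 : (if Q k m1 n1 then (1:ℕ) else 0) = 1 := if_pos (Or.inl ⟨rfl, rfl⟩)
    have hb2 : (if Q k m2 n2 then (1:ℕ) else 0) = 1 := if_pos (Or.inr ⟨rfl, rfl⟩)
    calc (2:ℕ) = 1 + 1 := rfl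
      _ ≤ (∑ n, if Q k m1 n then 1 else 0) + (∑ n, if Q k m2 n then 1 else 0) := by
          gcongr
          · exact hb1.ge.trans (Finset.single_le_sum (f := fun n => if Q k m1 n then (1:ℕ) else 0)
              (fun i _ => Nat.zero_le _) (Finset.mem_univ n1))
          · exact hb2.ge.trans (Finset.single_le_sum (f := fun n => if Q k m2 n then (1:ℕ) else 0)
              (fun i _ => Nat.zero_le _) (Finset.mem_univ n2))
      _ = ∑ m ∈ ({m1, m2} : Finset (Fin M)), ∑ n, if Q k m n then 1 else 0 :=
          (Finset.sum_pair (f := fun m => ∑ n, if Q k m n then (1:ℕ) else 0) hm12).symm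
      _ ≤ ∑ m, ∑ n, if Q k m n then 1 else 0 :=
          Finset.sum_le_sum_of_subset (Finset.subset_univ _)

/-- Lemma 2, interference-free case: for `K ≥ 1` targets and `M ≥ 2` base stations, the
smallest number `N` of time slots admitting a localization schedule equals
`max ⌈2K/M⌉ 2`. -/
theorem lemma2_min_slots_interference_free (K M : ℕ) (hK : 1 ≤ K) (hM : 2 ≤ M) :
    IsLeast {N : ℕ | ∃ b : Fin K → Fin M → Fin N → ℕ, IsSchedule K M N b}
      (max ⌈(2 * K : ℚ) / M⌉₊ 2) := by
  have hMq : (0:ℚ) < M := by exact_mod_cast (by omega : 0 < M)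
  constructor
  · -- membership: the explicit construction achieves the bound
    have hN2 : 2 ≤ max ⌈(2 * K : ℚ) / M⌉₊ 2 := le_max_right _ _
    have hceil : (2 * K : ℚ) / M ≤ (max ⌈(2 * K : ℚ) / M⌉₊ 2 : ℕ) := by
      refine le_trans (Nat.le_ceil _) ?_
      exact_mod_cast le_max_left ⌈(2 * K : ℚ) / M⌉₊ 2
    have hKMN : 2 * K ≤ M * max ⌈(2 * K : ℚ) / M⌉₊ 2 := by
      have h1 : (2 * K : ℚ) ≤ (max ⌈(2 * K : ℚ) / M⌉₊ 2 : ℕ) * M := (div_le_iff₀ hMq).mp hceil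
      have h2 : (2 * K : ℚ) ≤ (M : ℚ) * ((max ⌈(2 * K : ℚ) / M⌉₊ 2 : ℕ) : ℚ) := by
        rw [mul_comm ((M : ℚ))]; exact h1
      exact_mod_cast h2
    exact exists_schedule hM hN2 hKMN
  · -- lower bound
    rintro N ⟨b, hb1, hb2, hb3, hb4, hb5⟩
    have hN2 : 2 ≤ N := by
      set k0 : Fin K := ⟨0, hK⟩ with hk0
      calc (2:ℕ) ≤ ∑ m, ∑ n, b k0 m n := hb5 k0
        _ = ∑ n, ∑ m, b k0 m n := Finset.sum_comm
        _ ≤ ∑ _n : Fin N, 1 := Finset.sum_le_sum fun n _ => hb3 k0 n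
        _ = N := by simp
    have htotal : 2 * K ≤ M * N := by
      calc 2 * K = ∑ _k : Fin K, 2 := by simp [mul_comm]
        _ ≤ ∑ k, ∑ m, ∑ n, b k m n := Finset.sum_le_sum fun k _ => hb5 k
        _ = ∑ m, ∑ k : Fin K, ∑ n, b k m n := Finset.sum_comm
        _ = ∑ m, ∑ n, ∑ k, b k m n := Finset.sum_congr rfl fun m _ => Finset.sum_comm
        _ ≤ ∑ _m : Fin M, ∑ _n : Fin N, 1 :=
            Finset.sum_le_sum fun m _ => Finset.sum_le_sum fun n _ => hb2 m n
        _ = M * N := by simp [mul_comm]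
    refine max_le ?_ hN2
    rw [Nat.ceil_le, div_le_iff₀ hMq]
    rw [Nat.mul_comm M N] at htotal
    exact_mod_cast htotal
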